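/- If P is a finite interval order, then fldim(P) < 4. -/

import Mathlib

noncomputable section

/-- A partial linear extension (ple) of a poset, encoded as a list of distinct elements:
the list order is the linear order, and it must extend the poset order on its members. -/
def IsPLE (α : Type*) [PartialOrder α] [DecidableEq α] (l : List α) : Prop :=
  l.Nodup ∧ ∀ x ∈ l, ∀ y ∈ l, x < y → l.idxOf x < l.idxOf y

/-- `u ≤ v` in the ple `l`. -/
def pleLE {α : Type*} [DecidableEq α] (l : List α) (u v : α) : Prop :=
  u ∈ l ∧ v ∈ l ∧ l.idxOf u ≤ l.idxOf v

/-- `u < v` in the ple `l`. -/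
def pleLT {α : Type*} [DecidableEq α] (l : List α) (u v : α) : Prop :=
  u ∈ l ∧ v ∈ l ∧ l.idxOf u < l.idxOf v

/-- A local weight function: assigns to each ple of the poset a weight in [0,1]. -/
structure LocalWeight (α : Type*) [PartialOrder α] [DecidableEq α] where
  w : List α → ℝ
  nonneg : ∀ l, 0 ≤ w l
  le_one : ∀ l, w l ≤ 1
  supp : ∀ l, ¬ IsPLE α l → w l = 0

/-- local measure μ(u,w): total weight of ple's containing `u`. -/
def localMeasure {α : Type*} [PartialOrder α] [DecidableEq α] (W : LocalWeight α) (u : α) : ℝ :=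
  ∑ᶠ l ∈ {l : List α | IsPLE α l ∧ u ∈ l}, W.w l

/-- μ(P,w): the maximum local measure over elements of the poset. -/
def maxLocalMeasure {α : Type*} [PartialOrder α] [DecidableEq α] [Fintype α]
    (W : LocalWeight α) : ℝ :=
  ⨆ u : α, localMeasure W u

/-- A fractional local realizer. -/
def IsFLRealizer {α : Type*} [PartialOrder α] [DecidableEq α] (W : LocalWeight α) : Prop :=
  (∀ u v : α, u ≤ v →
    1 ≤ ∑ᶠ l ∈ {l : List α | IsPLE α l ∧ pleLE l u v}, W.w l) ∧
  (∀ u v : α, ¬ u ≤ v → ¬ v ≤ u →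
    1 ≤ ∑ᶠ l ∈ {l : List α | IsPLE α l ∧ pleLT l v u}, W.w l)

/-- The fractional local dimension of a finite poset. -/
def fldim (α : Type*) [PartialOrder α] [DecidableEq α] [Fintype α] : ℝ :=
  sInf {c : ℝ | ∃ W : LocalWeight α, IsFLRealizer W ∧ maxLocalMeasure W = c}

/-- The poset P(1,d;n): all 1-element and d-element subsets of {1,…,n}, ordered by inclusion. -/
abbrev PosetOneDN (d n : ℕ) := {S : Finset (Fin n) // S.card = 1 ∨ S.card = d}

/-- fldim(1,d;n). -/
def fldim1dn (d n : ℕ) : ℝ := fldim (PosetOneDN d n)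

end


open Finset

namespace FldimProof

open scoped Classical

noncomputable section
set_option linter.unusedSectionVars false

def NoTwoTwo (α : Type*) [PartialOrder α] : Prop :=
  ¬ ∃ a₁ a₂ b₁ b₂ : α,
      a₁ < b₂ ∧ a₂ < b₁ ∧
      ¬ a₁ ≤ b₁ ∧ ¬ b₁ ≤ a₁ ∧
      ¬ a₂ ≤ b₂ ∧ ¬ b₂ ≤ a₂ ∧
      ¬ a₁ ≤ a₂ ∧ ¬ a₂ ≤ a₁ ∧
      ¬ b₁ ≤ b₂ ∧ ¬ b₂ ≤ b₁

variable {α : Type*} [PartialOrder α] [DecidableEq α] [Fintype α]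

def Dset (x : α) : Finset α := Finset.univ.filter (· < x)

lemma mem_Dset {u x : α} : u ∈ Dset x ↔ u < x := by simp [Dset]

lemma Dchain (hio : NoTwoTwo α) (x y : α) : Dset x ⊆ Dset y ∨ Dset y ⊆ Dset x := by
  by_contra h
  push_neg at h
  obtain ⟨h1, h2⟩ := h
  obtain ⟨u, hux, huy⟩ := Finset.not_subset.1 h1
  obtain ⟨v, hvy, hvx⟩ := Finset.not_subset.1 h2
  rw [mem_Dset] at hux hvy
  rw [mem_Dset] at huy hvx
  apply hio
  refine ⟨u, v, y, x, hux, hvy, ?_, ?_, ?_, ?_, ?_, ?_, ?_, ?_⟩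
  · intro h; rcases lt_or_eq_of_le h with h' | h'
    · exact huy h'
    · subst h'; exact hvx (hvy.trans hux)
  · intro h; exact hvx (lt_of_lt_of_le hvy (h.trans hux.le))
  · intro h; rcases lt_or_eq_of_le h with h' | h'
    · exact hvx h'
    · subst h'; exact huy (hux.trans hvy)
  · intro h; exact huy (lt_of_lt_of_le hux (h.trans hvy.le))
  · intro h; exact huy (lt_of_le_of_lt h hvy)
  · intro h; exact hvx (lt_of_le_of_lt h hux)
  · intro h; exact hvx (lt_of_lt_of_le hvy h)
  · intro h; exact huy (lt_of_lt_of_le hux h)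

def DF (α : Type*) [PartialOrder α] [DecidableEq α] [Fintype α] : Finset (Finset α) :=
  Finset.univ.image Dset

lemma chainF (hio : NoTwoTwo α) {s t : Finset α} (hs : s ∈ DF α) (ht : t ∈ DF α) :
    s ⊆ t ∨ t ⊆ s := by
  obtain ⟨x, _, rfl⟩ := Finset.mem_image.1 hs
  obtain ⟨y, _, rfl⟩ := Finset.mem_image.1 ht
  exact Dchain hio x y

/-- left endpoint -/
def lF (x : α) : ℕ := ((DF α).filter (fun s => s ⊆ Dset x)).card

/-- right endpoint -/
def rF (x : α) : ℕ := ((DF α).filter (fun s => ∀ w ∈ s, ¬ x ≤ w)).card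

lemma filter_subset_of_card_le (hio : NoTwoTwo α)
    {p q : Finset α → Prop} [DecidablePred p] [DecidablePred q]
    (hp : ∀ s t : Finset α, s ∈ DF α → s ⊆ t → p t → p s)
    (hq : ∀ s t : Finset α, s ∈ DF α → s ⊆ t → q t → q s)
    (h : ((DF α).filter p).card ≤ ((DF α).filter q).card) :
    (DF α).filter p ⊆ (DF α).filter q := by
  by_contra hsub
  obtain ⟨a, hap, haq⟩ := Finset.not_subset.1 hsub
  have haF : a ∈ DF α := (Finset.mem_filter.1 hap).1
  have hpa : p a := (Finset.mem_filter.1 hap).2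
  have hTsub : (DF α).filter q ⊆ ((DF α).filter p).erase a := by
    intro b hb
    have hbF : b ∈ DF α := (Finset.mem_filter.1 hb).1
    have hqb : q b := (Finset.mem_filter.1 hb).2
    rcases chainF hio haF hbF with hab | hba
    · exact absurd (Finset.mem_filter.2 ⟨haF, hq a b haF hab hqb⟩) haq
    · have hpb : p b := hp b a hbF hba hpa
      refine Finset.mem_erase.2 ⟨?_, Finset.mem_filter.2 ⟨hbF, hpb⟩⟩
      rintro rfl
      exact haq hb
  have h2 := Finset.card_le_card hTsub
  rw [Finset.card_erase_of_mem hap] at h2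
  have hpos : 0 < ((DF α).filter p).card := Finset.card_pos.2 ⟨a, hap⟩
  omega

lemma lF_le_rF (x : α) : lF x ≤ rF x := by
  apply Finset.card_le_card
  intro s hs
  obtain ⟨hsF, hsub⟩ := Finset.mem_filter.1 hs
  refine Finset.mem_filter.2 ⟨hsF, fun w hw hxw => ?_⟩
  exact absurd ((mem_Dset).1 (hsub hw)) (not_lt_of_ge hxw)

lemma lt_iff_rF_lt_lF (hio : NoTwoTwo α) (x y : α) : x < y ↔ rF x < lF y := by
  constructor
  · intro hxy
    by_contra hle
    push_neg at hle
    have hsub := filter_subset_of_card_le hio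
      (p := fun s => s ⊆ Dset y) (q := fun s => ∀ w ∈ s, ¬ x ≤ w)
      (fun s t _ hst hpt => hst.trans hpt)
      (fun s t _ hst hqt w hw => hqt w (hst hw)) hle
    have hDy : Dset y ∈ (DF α).filter (fun s => s ⊆ Dset y) :=
      Finset.mem_filter.2 ⟨Finset.mem_image.2 ⟨y, Finset.mem_univ y, rfl⟩, Finset.Subset.refl _⟩
    have := (Finset.mem_filter.1 (hsub hDy)).2
    exact this x (mem_Dset.2 hxy) le_rfl
  · intro h
    by_contra hxy
    have hsub : (DF α).filter (fun s => s ⊆ Dset y) ⊆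
        (DF α).filter (fun s => ∀ w ∈ s, ¬ x ≤ w) := by
      intro s hs
      obtain ⟨hsF, hsy⟩ := Finset.mem_filter.1 hs
      refine Finset.mem_filter.2 ⟨hsF, fun w hw hxw => ?_⟩
      exact hxy (lt_of_le_of_lt hxw (mem_Dset.1 (hsy hw)))
    have := Finset.card_le_card hsub
    unfold lF rF at h
    omega



open Finset List

lemma pack_le_of (B a₁ b₁ c₁ a₂ b₂ c₂ : ℕ) (h1 : b₁ < B) (h3 : c₁ ≤ B) (h4 : c₂ < B)
    (h : a₁ < a₂ ∨ (a₁ = a₂ ∧ (b₁ < b₂ ∨ (b₁ = b₂ ∧ c₁ ≤ c₂)))) :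
    a₁ * B^2 + b₁ * B + c₁ ≤ a₂ * B^2 + b₂ * B + c₂ := by
  have hB : 0 < B := by omega
  rcases h with h | ⟨rfl, h⟩
  · have e1 : b₁ * B + c₁ ≤ B^2 := by nlinarith
    have e2 : (a₁ + 1) * B^2 ≤ a₂ * B^2 := by
      apply Nat.mul_le_mul_right; omega
    nlinarith
  · rcases h with h | ⟨rfl, h⟩
    · have e2 : (b₁ + 1) * B ≤ b₂ * B := by apply Nat.mul_le_mul_right; omega
      nlinarith
    · omega

lemma pack_lt_iff (B a₁ b₁ c₁ a₂ b₂ c₂ : ℕ) (h1 : b₁ < B) (h2 : b₂ < B) (h3 : c₁ < B) (h4 : c₂ < B) :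
    a₁ * B^2 + b₁ * B + c₁ < a₂ * B^2 + b₂ * B + c₂ ↔
      (a₁ < a₂ ∨ (a₁ = a₂ ∧ (b₁ < b₂ ∨ (b₁ = b₂ ∧ c₁ < c₂)))) := by
  constructor
  · intro h
    by_contra hc
    have : a₂ < a₁ ∨ (a₂ = a₁ ∧ (b₂ < b₁ ∨ (b₂ = b₁ ∧ c₂ ≤ c₁))) := by omega
    have := pack_le_of B a₂ b₂ c₂ a₁ b₁ c₁ h2 (le_of_lt h4) h3 this
    omega
  · intro h
    have h' : a₁ < a₂ ∨ (a₁ = a₂ ∧ (b₁ < b₂ ∨ (b₁ = b₂ ∧ c₁ + 1 ≤ c₂))) := by omega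
    have := pack_le_of B a₁ b₁ (c₁+1) a₂ b₂ c₂ h1 (by omega) h4 h'
    omega

-- sorted list position lemma
lemma indexOf_lt_indexOf_of_sorted {β : Type*} [DecidableEq β] {K : β → ℕ}
    (L : List β) (hnd : L.Nodup) (hs : L.Pairwise (fun a b => K a ≤ K b))
    (hK : ∀ a b, a ∈ L → b ∈ L → K a = K b → a = b)
    {x y : β} (hx : x ∈ L) (hy : y ∈ L) :
    L.idxOf x < L.idxOf y ↔ K x < K y := by
  have hxl : L.idxOf x < L.length := List.idxOf_lt_length_iff.2 hx
  have hyl : L.idxOf y < L.length := List.idxOf_lt_length_iff.2 hy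
  have hgx : L[L.idxOf x] = x := List.getElem_idxOf hxl
  have hgy : L[L.idxOf y] = y := List.getElem_idxOf hyl
  rw [List.pairwise_iff_getElem] at hs
  constructor
  · intro hlt
    have := hs _ _ hxl hyl hlt
    rw [hgx, hgy] at this
    rcases this.lt_or_eq with h | h
    · exact h
    · exact absurd (hK x y hx hy h) (by rintro rfl; omega)
  · intro hlt
    rcases lt_trichotomy (L.idxOf x) (L.idxOf y) with h | h | h
    · exact h
    · exfalso
      have hxy : x = y := (List.idxOf_inj hx).1 h
      subst hxy; omega
    · exfalso
      have := hs _ _ hyl hxl h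
      rw [hgx, hgy] at this
      omega

lemma pack_eq (B a₁ b₁ c₁ a₂ b₂ c₂ : ℕ) (h1 : b₁ < B) (h2 : b₂ < B) (h3 : c₁ < B) (h4 : c₂ < B)
    (h : a₁ * B^2 + b₁ * B + c₁ = a₂ * B^2 + b₂ * B + c₂) :
    a₁ = a₂ ∧ b₁ = b₂ ∧ c₁ = c₂ := by
  have e1 := pack_lt_iff B a₁ b₁ c₁ a₂ b₂ c₂ h1 h2 h3 h4
  have e2 := pack_lt_iff B a₂ b₂ c₂ a₁ b₁ c₁ h2 h1 h4 h3
  omega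

/-! ### The construction -/

lemma pack2_lt_iff (M a₁ r₁ a₂ r₂ : ℕ) (h1 : r₁ < M) (h2 : r₂ < M) :
    a₁ * M + r₁ < a₂ * M + r₂ ↔ (a₁ < a₂ ∨ (a₁ = a₂ ∧ r₁ < r₂)) := by
  constructor
  · intro h
    by_contra hc
    have hc' : a₂ < a₁ ∨ (a₂ = a₁ ∧ r₂ ≤ r₁) := by omega
    rcases hc' with hc' | ⟨rfl, hc'⟩
    · have : (a₂ + 1) * M ≤ a₁ * M := Nat.mul_le_mul_right _ (by omega)
      nlinarith
    · omega
  · rintro (h | ⟨rfl, h⟩)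
    · have : (a₁ + 1) * M ≤ a₂ * M := Nat.mul_le_mul_right _ (by omega)
      nlinarith
    · omega

variable (α) in
def tau (z : α) : ℕ := ((Fintype.equivFin α) z : ℕ)

variable (α) in
def nn : ℕ := Fintype.card α

lemma tau_lt (z : α) : tau α z < nn α := (Fintype.equivFin α z).isLt

lemma tau_inj {z w : α} (h : tau α z = tau α w) : z = w :=
  (Fintype.equivFin α).injective (Fin.ext h)

variable (α) in
def Bc : ℕ := nn α + 2

variable (α) in
def Mc : ℕ := Bc α * Bc α

lemma kbounds (z : α) : tau α z < Mc α ∧ Bc α + (nn α - tau α z) < Mc α ∧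
    tau α z < Bc α ∧ 2 * Bc α ≤ Mc α := by
  have h := tau_lt (α := α) z
  have hB : Bc α = nn α + 2 := rfl
  have hM : Mc α = Bc α * Bc α := rfl
  have h2 : 2 ≤ Bc α := by omega
  have h2B : 2 * Bc α ≤ Mc α := by nlinarith
  refine ⟨by omega, by omega, by omega, h2B⟩

def kL (z : α) : ℕ := lF z * Mc α + tau α z
def kR (z : α) : ℕ := rF z * Mc α + (Bc α + (nn α - tau α z))

def Kk (q : α → Bool) (z : α) : ℕ := if q z then kR z else kL z

lemma kL_lt_kL_iff {z w : α} : kL z < kL w ↔ lF z < lF w ∨ (lF z = lF w ∧ tau α z < tau α w) :=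
  pack2_lt_iff _ _ _ _ _ (kbounds z).1 (kbounds w).1

lemma kR_lt_kR_iff {z w : α} :
    kR z < kR w ↔ rF z < rF w ∨ (rF z = rF w ∧ nn α - tau α z < nn α - tau α w) :=
  pack2_lt_iff _ _ _ _ _ (kbounds z).2.1 (kbounds w).2.1 |>.trans (by omega)

lemma kL_lt_kR (z w : α) (h : lF z ≤ rF w) : kL z < kR w := by
  unfold kL kR
  rw [pack2_lt_iff _ _ _ _ _ (kbounds z).1 (kbounds w).2.1]
  rcases lt_or_eq_of_le h with h | h
  · exact Or.inl h
  · exact Or.inr ⟨h, by have := (kbounds (α := α) z).2.2.1; omega⟩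

lemma kR_lt_kL (z w : α) (h : rF z < lF w) : kR z < kL w := by
  unfold kL kR
  rw [pack2_lt_iff _ _ _ _ _ (kbounds z).2.1 (kbounds w).1]
  exact Or.inl h

lemma Kk_inj (q : α → Bool) {z w : α} (h : Kk q z = Kk q w) : z = w := by
  have hz := kbounds (α := α) z
  have hw := kbounds (α := α) w
  have hz' := tau_lt (α := α) z
  have hw' := tau_lt (α := α) w
  have key : ∀ a₁ r₁ a₂ r₂ : ℕ, r₁ < Mc α → r₂ < Mc α →
      a₁ * Mc α + r₁ = a₂ * Mc α + r₂ → r₁ = r₂ := by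
    intro a₁ r₁ a₂ r₂ hr1 hr2 heq
    have e1 := pack2_lt_iff (Mc α) a₁ r₁ a₂ r₂ hr1 hr2
    have e2 := pack2_lt_iff (Mc α) a₂ r₂ a₁ r₁ hr2 hr1
    omega
  unfold Kk kL kR at h
  split at h <;> split at h
  · have := key _ _ _ _ hz.2.1 hw.2.1 h
    exact tau_inj (by omega)
  · have := key _ _ _ _ hz.2.1 hw.1 h
    omega
  · have := key _ _ _ _ hz.1 hw.2.1 h
    omega
  · have := key _ _ _ _ hz.1 hw.1 h
    exact tau_inj this

/-- the sorted list for pattern `q` -/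
def Phi (q : α → Bool) : List α :=
  List.insertionSort (fun a b => Kk q a ≤ Kk q b) Finset.univ.toList

lemma Phi_perm (q : α → Bool) : (Phi q).Perm Finset.univ.toList :=
  List.perm_insertionSort _ _

lemma mem_Phi (q : α → Bool) (z : α) : z ∈ Phi q := by
  rw [(Phi_perm q).mem_iff, Finset.mem_toList]
  exact Finset.mem_univ z

lemma Phi_nodup (q : α → Bool) : (Phi q).Nodup :=
  (Phi_perm q).nodup_iff.2 (Finset.nodup_toList _)

lemma Phi_sorted (q : α → Bool) : (Phi q).Pairwise (fun a b => Kk q a ≤ Kk q b) := by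
  have : IsTotal α (fun a b => Kk q a ≤ Kk q b) := ⟨fun a b => le_total _ _⟩
  have : IsTrans α (fun a b => Kk q a ≤ Kk q b) := ⟨fun a b c => le_trans⟩
  exact List.pairwise_insertionSort _ _

lemma Phi_pos_iff (q : α → Bool) {x y : α} :
    (Phi q).idxOf x < (Phi q).idxOf y ↔ Kk q x < Kk q y :=
  indexOf_lt_indexOf_of_sorted (Phi q) (Phi_nodup q) (Phi_sorted q)
    (fun a b _ _ h => Kk_inj q h) (mem_Phi q x) (mem_Phi q y)

lemma Kk_lt_of_lt (hio : NoTwoTwo α) (q : α → Bool) {x y : α} (hxy : x < y) :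
    Kk q x < Kk q y := by
  have hrl : rF x < lF y := (lt_iff_rF_lt_lF hio x y).1 hxy
  have e1 : Kk q x ≤ kR x := by
    unfold Kk
    split
    · exact le_refl _
    · exact le_of_lt (kL_lt_kR x x (lF_le_rF x))
  have e2 : kL y ≤ Kk q y := by
    unfold Kk
    split
    · exact le_of_lt (kL_lt_kR y y (lF_le_rF y))
    · exact le_refl _
  exact lt_of_le_of_lt e1 (lt_of_lt_of_le (kR_lt_kL x y hrl) e2)

lemma Phi_isPLE (hio : NoTwoTwo α) (q : α → Bool) : IsPLE α (Phi q) := by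
  refine ⟨Phi_nodup q, fun x _ y _ hxy => ?_⟩
  exact (Phi_pos_iff q).2 (Kk_lt_of_lt hio q hxy)

/-! ### Weights -/

lemma sum_prod_bool (g : α → Bool → ℝ) :
    ∑ q : α → Bool, ∏ z, g z (q z) = ∏ z, (g z true + g z false) := by
  have h : ∀ z : α, (g z true + g z false) = ∑ b : Bool, g z b := by
    intro z; simp [Fintype.sum_bool]
  simp_rw [h]
  rw [Finset.prod_univ_sum, Fintype.piFinset_univ]

variable (α) in
def sC (z : α) : ℕ := lF z + rF z

variable (α) in
def Hc : ℕ := Finset.univ.sup (sC α)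

lemma sC_le_Hc (z : α) : sC α z ≤ Hc α := Finset.le_sup (Finset.mem_univ z)

variable (α) in
def eps : ℝ := 1 / (8 * ((Hc α : ℝ)^2 + 1))

lemma eps_pos : 0 < eps α := by
  unfold eps
  positivity

lemma eps_le : eps α * ((Hc α : ℝ)^2 + 1) = 1/8 := by
  unfold eps
  field_simp

lemma eps_mul_sC_le (z : α) : eps α * (sC α z : ℝ) ≤ 1/8 := by
  have h1 : (sC α z : ℝ) ≤ (Hc α : ℝ) := by exact_mod_cast sC_le_Hc z
  have h2 : (Hc α : ℝ) ≤ (Hc α : ℝ)^2 + 1 := by nlinarith [sq_nonneg ((Hc α : ℝ) - 1)]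
  have h3 := eps_le (α := α)
  have h4 := eps_pos (α := α)
  nlinarith

def rho (z : α) : ℝ := 1/2 - eps α * (sC α z : ℝ)
def lam (z : α) : ℝ := 1/2 + eps α * (sC α z : ℝ)

lemma rho_ge (z : α) : 3/8 ≤ rho z := by
  have := eps_mul_sC_le z; unfold rho; linarith

lemma rho_le (z : α) : rho z ≤ 1/2 := by
  have h1 := eps_pos (α := α)
  have h2 : (0:ℝ) ≤ (sC α z : ℝ) := Nat.cast_nonneg _
  unfold rho; nlinarith

lemma lam_ge (z : α) : 1/2 ≤ lam z := by
  have h1 := eps_pos (α := α)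
  have h2 : (0:ℝ) ≤ (sC α z : ℝ) := Nat.cast_nonneg _
  unfold lam; nlinarith

lemma lam_le (z : α) : lam z ≤ 5/8 := by
  have := eps_mul_sC_le z; unfold lam; linarith

def fw (z : α) (b : Bool) : ℝ := if b then rho z else lam z

lemma fw_nonneg (z : α) (b : Bool) : 0 ≤ fw z b := by
  unfold fw; split
  · linarith [rho_ge z]
  · linarith [lam_ge z]

lemma fw_total (z : α) : fw z true + fw z false = 1 := by
  unfold fw rho lam; simp; ring

def wq (q : α → Bool) : ℝ := ∏ z, fw z (q z)

lemma wq_nonneg (q : α → Bool) : 0 ≤ wq q :=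
  Finset.prod_nonneg fun z _ => fw_nonneg z (q z)

lemma sum_wq : ∑ q : α → Bool, wq q = 1 := by
  unfold wq
  rw [sum_prod_bool]
  simp_rw [fw_total]
  simp

lemma marginal (x y : α) (hxy : x ≠ y) (bx by_ : Bool) :
    ∑ q ∈ Finset.univ.filter (fun q : α → Bool => q x = bx ∧ q y = by_), wq q
      = fw x bx * fw y by_ := by
  classical
  set g : α → Bool → ℝ := fun z b =>
    if z = x then (if b = bx then fw x b else 0)
    else if z = y then (if b = by_ then fw y b else 0)
    else fw z b with hg
  have key : ∀ q : α → Bool,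
      (if (q x = bx ∧ q y = by_) then wq q else 0) = ∏ z, g z (q z) := by
    intro q
    by_cases h : q x = bx ∧ q y = by_
    · rw [if_pos h]
      unfold wq
      refine Finset.prod_congr rfl fun z _ => ?_
      by_cases hzx : z = x
      · subst hzx; simp [hg, h.1]
      · by_cases hzy : z = y
        · subst hzy; simp [hg, hzx, h.2]
        · simp [hg, hzx, hzy]
    · rw [if_neg h]
      rcases not_and_or.1 h with h' | h'
      · exact (Finset.prod_eq_zero (Finset.mem_univ x) (by simp [hg, h'])).symm
      · exact (Finset.prod_eq_zero (Finset.mem_univ y)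
          (by simp [hg, Ne.symm hxy, h'])).symm
  rw [Finset.sum_filter]
  simp_rw [key]
  rw [sum_prod_bool]
  have hx : g x true + g x false = fw x bx := by
    cases bx <;> simp [hg]
  have hy : g y true + g y false = fw y by_ := by
    cases by_ <;> simp [hg, Ne.symm hxy]
  have hother : ∀ z : α, z ≠ x → z ≠ y → g z true + g z false = 1 := by
    intro z h1 h2; simp [hg, h1, h2, fw_total]
  rw [← Finset.mul_prod_erase Finset.univ _ (Finset.mem_univ x)]
  rw [← Finset.mul_prod_erase _ _ (Finset.mem_erase.2 ⟨Ne.symm hxy, Finset.mem_univ y⟩)]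
  rw [hx, hy]
  rw [Finset.prod_eq_one]
  · ring
  · intro z hz
    obtain ⟨hzy, hz⟩ := Finset.mem_erase.1 hz
    obtain ⟨hzx, _⟩ := Finset.mem_erase.1 hz
    exact hother z hzx hzy

variable (α) in
def Tc : ℝ := (1/4 + eps α / 4)⁻¹

lemma Tc_pos : 0 < Tc α := by
  have := eps_pos (α := α); unfold Tc; positivity

lemma Tc_lt_four : Tc α < 4 := by
  have h := eps_pos (α := α)
  have h2 : (0:ℝ) < 1/4 + eps α / 4 := by linarith
  have : (1:ℝ)/4 < 1/4 + eps α / 4 := by linarith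
  calc Tc α < (1/4 : ℝ)⁻¹ := by
        apply inv_strictAnti₀ (by norm_num) this
    _ = 4 := by norm_num
  
lemma one_le_Tc : 1 ≤ Tc α := by
  have h := eps_mul_sC_le (α := α)
  have h8 : eps α ≤ 1/8 := by
    have h1 := eps_le (α := α)
    have h2 : (1:ℝ) ≤ (Hc α : ℝ)^2 + 1 := by nlinarith [sq_nonneg (Hc α : ℝ)]
    have h4 := eps_pos (α := α)
    nlinarith
  have hp : (0:ℝ) < 1/4 + eps α / 4 := by linarith [eps_pos (α := α)]
  unfold Tc
  rw [le_inv_comm₀ (by norm_num) hp]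
  norm_num
  linarith
  
lemma cov_of_ge {S : ℝ} (hS : 1/4 + eps α / 4 ≤ S) : 1 ≤ Tc α * S := by
  have hp : (0:ℝ) < 1/4 + eps α / 4 := by linarith [eps_pos (α := α)]
  have h1 : Tc α * (1/4 + eps α / 4) = 1 := inv_mul_cancel₀ (ne_of_gt hp)
  have h2 : Tc α * (1/4 + eps α / 4) ≤ Tc α * S :=
    mul_le_mul_of_nonneg_left hS (le_of_lt (Tc_pos (α := α)))
  linarith

lemma incomp_coverage (hio : NoTwoTwo α) (x y : α) (hxy1 : ¬ x ≤ y) (hxy2 : ¬ y ≤ x) :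
    1 ≤ Tc α * ∑ q ∈ Finset.univ.filter (fun q : α → Bool => Kk q y < Kk q x), wq q := by
  classical
  have hne : x ≠ y := fun h => hxy1 (le_of_eq h)
  have hlyrx : lF y ≤ rF x := by
    by_contra h
    exact hxy1 (le_of_lt ((lt_iff_rF_lt_lF hio x y).2 (by omega)))
  have hE0 : ∀ q : α → Bool, q x = true → q y = false → Kk q y < Kk q x := by
    intro q h1 h2
    unfold Kk
    rw [h1, h2]
    simp only [if_true, Bool.false_eq_true, if_false]
    exact kL_lt_kR y x hlyrx
  clear hxy1 hxy2
  set S := ∑ q ∈ Finset.univ.filter (fun q : α → Bool => Kk q y < Kk q x), wq q with hs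
  have hmono : ∀ (p : (α → Bool) → Prop) (_ : DecidablePred p),
      (∀ q, p q → Kk q y < Kk q x) →
      ∑ q ∈ Finset.univ.filter p, wq q ≤ S := by
    intro p hdec hp
    apply Finset.sum_le_sum_of_subset_of_nonneg
    · intro q hq
      rw [Finset.mem_filter] at hq ⊢
      exact ⟨hq.1, hp q hq.2⟩
    · intro q _ _
      exact wq_nonneg q
  -- the always-reversing block (x true, y false)
  have hS0 : ∑ q ∈ Finset.univ.filter (fun q : α → Bool => q x = true ∧ q y = false), wq q
      = rho x * lam y := by
    rw [marginal x y hne true false]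
    simp [fw]
  by_cases hA : kL y < kL x
  · -- add block (x false, y false)
    have h1 : ∑ q ∈ Finset.univ.filter
        (fun q : α → Bool => (q x = true ∧ q y = false) ∨ (q x = false ∧ q y = false)),
        wq q ≤ S := by
      apply hmono _ _ ?_
      rintro q (⟨h1, h2⟩ | ⟨h1, h2⟩)
      · exact hE0 q h1 h2
      · unfold Kk; rw [h1, h2]
        simp only [Bool.false_eq_true, if_false]
        exact hA
    rw [Finset.filter_or, Finset.sum_union (by
      rw [Finset.disjoint_filter]
      rintro q _ ⟨h1, _⟩ ⟨h2, _⟩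
      rw [h1] at h2; exact Bool.noConfusion h2)] at h1
    rw [hS0, marginal x y hne false false] at h1
    simp only [fw, if_false, Bool.false_eq_true] at h1
    have e1 := rho_ge x; have e2 := lam_ge y; have e3 := lam_ge x
    have h8 : eps α ≤ 1/8 := by
      have h1' := eps_le (α := α)
      have h2' : (1:ℝ) ≤ (Hc α : ℝ)^2 + 1 := by nlinarith [sq_nonneg (Hc α : ℝ)]
      have h4' := eps_pos (α := α)
      nlinarith
    apply cov_of_ge
    nlinarith
  · by_cases hB : kR y < kR x
    · have h1 : ∑ q ∈ Finset.univ.filter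
          (fun q : α → Bool => (q x = true ∧ q y = false) ∨ (q x = true ∧ q y = true)),
          wq q ≤ S := by
        apply hmono _ _ ?_
        rintro q (⟨h1, h2⟩ | ⟨h1, h2⟩)
        · exact hE0 q h1 h2
        · unfold Kk; rw [h1, h2]
          simp only [if_true]
          exact hB
      rw [Finset.filter_or, Finset.sum_union (by
        rw [Finset.disjoint_filter]
        rintro q _ ⟨_, h1⟩ ⟨_, h2⟩
        rw [h1] at h2; exact Bool.noConfusion h2)] at h1
      rw [hS0, marginal x y hne true true] at h1
      simp only [fw, if_true] at h1
      have e1 := rho_ge x; have e2 := lam_ge y; have e3 := rho_ge y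
      have h8 : eps α ≤ 1/8 := by
        have h1' := eps_le (α := α)
        have h2' : (1:ℝ) ≤ (Hc α : ℝ)^2 + 1 := by nlinarith [sq_nonneg (Hc α : ℝ)]
        have h4' := eps_pos (α := α)
        nlinarith
      apply cov_of_ge
      nlinarith
    · -- main case: sC x < sC y
      have hscs : sC α x < sC α y := by
        rw [kL_lt_kL_iff] at hA
        rw [kR_lt_kR_iff] at hB
        have htx := tau_lt (α := α) x
        have hty := tau_lt (α := α) y
        have htne : tau α x ≠ tau α y := fun h => hne (tau_inj h)
        unfold sC
        omega
      have h1 : rho x * lam y ≤ S := by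
        rw [← hS0]
        apply hmono _ _ ?_
        rintro q ⟨h1, h2⟩
        exact hE0 q h1 h2
      apply cov_of_ge
      have ha : (sC α x : ℝ) ≤ (Hc α : ℝ) := by exact_mod_cast sC_le_Hc x
      have hb : (sC α y : ℝ) ≤ (Hc α : ℝ) := by exact_mod_cast sC_le_Hc y
      have hab : (sC α x : ℝ) + 1 ≤ (sC α y : ℝ) := by exact_mod_cast hscs
      have h0a : (0:ℝ) ≤ (sC α x : ℝ) := Nat.cast_nonneg _
      have h0b : (0:ℝ) ≤ (sC α y : ℝ) := Nat.cast_nonneg _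
      have hε := eps_le (α := α)
      have hεp := eps_pos (α := α)
      have hH2 : eps α * ((sC α x : ℝ) * (sC α y : ℝ)) ≤ 1/8 := by
        have : (sC α x : ℝ) * (sC α y : ℝ) ≤ (Hc α : ℝ)^2 := by nlinarith
        nlinarith
      have expand : rho x * lam y
          = 1/4 + eps α * ((sC α y : ℝ) - (sC α x : ℝ))/2
            - eps α ^2 * ((sC α x : ℝ) * (sC α y : ℝ)) := by
        unfold rho lam; ring
      rw [expand] at h1
      have hq : eps α ^ 2 * ((sC α x : ℝ) * (sC α y : ℝ)) ≤ eps α * (1/8) := by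
        have := mul_le_mul_of_nonneg_left hH2 (le_of_lt hεp)
        nlinarith
      have hd : eps α * 1 ≤ eps α * ((sC α y : ℝ) - (sC α x : ℝ)) :=
        mul_le_mul_of_nonneg_left (by linarith) (le_of_lt hεp)
      linarith

/-! ### The local weight function -/

def raw (L : List α) : ℝ :=
  Tc α * ∑ q ∈ Finset.univ.filter (fun q : α → Bool => Phi q = L), wq q

def Wfun (L : List α) : ℝ := min 1 (raw L)

lemma raw_nonneg (L : List α) : 0 ≤ raw L :=
  mul_nonneg (le_of_lt (Tc_pos (α := α))) (Finset.sum_nonneg fun q _ => wq_nonneg q)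

lemma Wfun_nonneg (L : List α) : 0 ≤ Wfun L := le_min (by norm_num) (raw_nonneg L)

lemma Wfun_le_one (L : List α) : Wfun L ≤ 1 := min_le_left _ _

lemma Wfun_mem_image {L : List α} (h : Wfun L ≠ 0) : L ∈ Finset.univ.image (Phi (α := α)) := by
  by_contra hL
  apply h
  have : Finset.univ.filter (fun q : α → Bool => Phi q = L) = ∅ := by
    rw [Finset.filter_eq_empty_iff]
    intro q _ hq
    exact hL (Finset.mem_image.2 ⟨q, Finset.mem_univ q, hq⟩)
  unfold Wfun raw
  rw [this]
  simp

lemma finsum_Wfun_eq (S : Set (List α)) [DecidablePred (· ∈ S)] :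
    ∑ᶠ l ∈ S, Wfun l
      = ∑ l ∈ (Finset.univ.image (Phi (α := α))).filter (· ∈ S), Wfun l := by
  apply finsum_mem_eq_sum_of_inter_support_eq
  ext l
  constructor
  · rintro ⟨hS, hsup⟩
    exact ⟨Finset.mem_coe.2 (Finset.mem_filter.2 ⟨Wfun_mem_image hsup, hS⟩), hsup⟩
  · rintro ⟨hl, hsup⟩
    exact ⟨(Finset.mem_filter.1 (Finset.mem_coe.1 hl)).2, hsup⟩

lemma sum_raw_fiber (A : Finset (List α)) (B : Finset (α → Bool))
    (hB : B = Finset.univ.filter (fun q => Phi q ∈ A)) :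
    ∑ l ∈ A, raw l = Tc α * ∑ q ∈ B, wq q := by
  unfold raw
  rw [← Finset.mul_sum]
  congr 1
  rw [← Finset.sum_fiberwise_of_maps_to (g := Phi) (t := A)
    (fun q hq => by rw [hB] at hq; exact (Finset.mem_filter.1 hq).2) wq]
  apply Finset.sum_congr rfl
  intro l hl
  apply Finset.sum_congr ?_ (fun _ _ => rfl)
  rw [hB]
  ext q
  simp only [Finset.mem_filter, Finset.mem_univ, true_and]
  constructor
  · intro h; exact ⟨by rw [h]; exact hl, h⟩
  · intro h; exact h.2

lemma cover (S : Set (List α)) [DecidablePred (· ∈ S)] (Q0 : Finset (α → Bool)) (hQ : ∀ q ∈ Q0, Phi q ∈ S)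
    (h : 1 ≤ Tc α * ∑ q ∈ Q0, wq q) : 1 ≤ ∑ᶠ l ∈ S, Wfun l := by
  classical
  rw [finsum_Wfun_eq]
  set A := (Finset.univ.image (Phi (α := α))).filter (· ∈ S) with hA
  by_cases hex : ∃ l ∈ A, 1 ≤ raw l
  · obtain ⟨l, hl, hraw⟩ := hex
    have h1 : Wfun l = 1 := min_eq_left hraw
    have := Finset.single_le_sum (fun l _ => Wfun_nonneg l) hl
    rw [h1] at this
    exact this
  · push_neg at hex
    have heq : ∀ l ∈ A, Wfun l = raw l := fun l hl =>
      min_eq_right (le_of_lt (hex l hl))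
    rw [Finset.sum_congr rfl heq]
    rw [sum_raw_fiber A (Finset.univ.filter (fun q => Phi q ∈ A)) rfl]
    have hsub : Q0 ⊆ Finset.univ.filter (fun q => Phi q ∈ A) := by
      intro q hq
      refine Finset.mem_filter.2 ⟨Finset.mem_univ q, ?_⟩
      rw [hA]
      exact Finset.mem_filter.2
        ⟨Finset.mem_image.2 ⟨q, Finset.mem_univ q, rfl⟩, hQ q hq⟩
    have hmono : ∑ q ∈ Q0, wq q ≤ ∑ q ∈ Finset.univ.filter (fun q => Phi q ∈ A), wq q :=
      Finset.sum_le_sum_of_subset_of_nonneg hsub (fun q _ _ => wq_nonneg q)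
    have := mul_le_mul_of_nonneg_left hmono (le_of_lt (Tc_pos (α := α)))
    linarith

def Wloc (hio : NoTwoTwo α) : LocalWeight α where
  w := Wfun
  nonneg := Wfun_nonneg
  le_one := Wfun_le_one
  supp := by
    intro L hL
    by_contra h
    exact hL ((Finset.mem_image.1 (Wfun_mem_image h)).elim
      (fun q hq => hq.2 ▸ Phi_isPLE hio q))

lemma Wloc_realizer (hio : NoTwoTwo α) : IsFLRealizer (Wloc hio) := by
  constructor
  · intro u v huv
    apply cover _ Finset.univ
    · intro q _
      refine ⟨Phi_isPLE hio q, mem_Phi q u, mem_Phi q v, ?_⟩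
      rcases lt_or_eq_of_le huv with h | h
      · exact le_of_lt ((Phi_pos_iff q).2 (Kk_lt_of_lt hio q h))
      · rw [h]
    · rw [sum_wq]
      rw [mul_one]
      exact one_le_Tc
  · intro u v h1 h2
    apply cover _ (Finset.univ.filter (fun q : α → Bool => Kk q v < Kk q u))
    · intro q hq
      refine ⟨Phi_isPLE hio q, mem_Phi q v, mem_Phi q u, ?_⟩
      exact (Phi_pos_iff q).2 (Finset.mem_filter.1 hq).2
    · exact incomp_coverage hio u v h1 h2

lemma localMeasure_Wloc_le (hio : NoTwoTwo α) (u : α) :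
    localMeasure (Wloc hio) u ≤ Tc α := by
  have e : localMeasure (Wloc hio) u
      = ∑ᶠ l ∈ {l : List α | IsPLE α l ∧ u ∈ l}, Wfun l := rfl
  rw [e, finsum_Wfun_eq]
  refine le_trans (Finset.sum_le_sum fun l _ => min_le_right 1 (raw l)) ?_
  refine le_trans (Finset.sum_le_sum_of_subset_of_nonneg
    (Finset.filter_subset _ _) (fun l _ _ => raw_nonneg l)) ?_
  rw [sum_raw_fiber _ _ rfl]
  have heq : Finset.univ.filter
      (fun q : α → Bool => Phi q ∈ Finset.univ.image (Phi (α := α))) = Finset.univ := by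
    apply Finset.filter_true_of_mem
    intro q _
    exact Finset.mem_image.2 ⟨q, Finset.mem_univ q, rfl⟩
  rw [heq, sum_wq, mul_one]

lemma maxLocalMeasure_lt_four (hio : NoTwoTwo α) : maxLocalMeasure (Wloc hio) < 4 := by
  unfold maxLocalMeasure
  cases isEmpty_or_nonempty α with
  | inl h =>
    rw [show (⨆ u : α, localMeasure (Wloc hio) u) = 0 from Real.iSup_of_isEmpty _]
    norm_num
  | inr h =>
    exact lt_of_le_of_lt (ciSup_le (localMeasure_Wloc_le hio)) Tc_lt_four

lemma localMeasure_nonneg (W : LocalWeight α) (u : α) : 0 ≤ localMeasure W u := by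
  unfold localMeasure
  rw [finsum_mem_def]
  exact finsum_nonneg (Set.indicator_nonneg (fun l _ => W.nonneg l))

theorem main (hio : NoTwoTwo α) : fldim α < 4 := by
  have hmem : maxLocalMeasure (Wloc hio) ∈
      {c : ℝ | ∃ W : LocalWeight α, IsFLRealizer W ∧ maxLocalMeasure W = c} :=
    ⟨Wloc hio, Wloc_realizer hio, rfl⟩
  have hbdd : BddBelow {c : ℝ | ∃ W : LocalWeight α, IsFLRealizer W ∧ maxLocalMeasure W = c} := by
    refine ⟨0, ?_⟩
    rintro c ⟨W, _, rfl⟩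
    exact Real.iSup_nonneg (localMeasure_nonneg W)
  exact lt_of_le_of_lt (csInf_le hbdd hmem) (maxLocalMeasure_lt_four hio)

end
end FldimProof

/-- If P is a finite interval order (no induced copy of the standard
example S₂, i.e. no 2+2), then fldim(P) < 4. -/
theorem fldim_interval_order_lt_four (α : Type*) [PartialOrder α] [DecidableEq α] [Fintype α]
    (hio : ¬ ∃ a₁ a₂ b₁ b₂ : α,
      a₁ < b₂ ∧ a₂ < b₁ ∧
      ¬ a₁ ≤ b₁ ∧ ¬ b₁ ≤ a₁ ∧
      ¬ a₂ ≤ b₂ ∧ ¬ b₂ ≤ a₂ ∧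
      ¬ a₁ ≤ a₂ ∧ ¬ a₂ ≤ a₁ ∧
      ¬ b₁ ≤ b₂ ∧ ¬ b₂ ≤ b₁) :
    fldim α < 4 :=
  FldimProof.main hio
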